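/- For every α ∈ C^i(X, F₂) on a finite pure d-dimensional homogeneous simplicial complex X, there exists a locally minimal α′ ∈ C^i(X, F₂) with α′ ≡ α (mod B^i(X, F₂)) and ||α′|| ≤ ||α||. -/

import Mathlib

open Finset

variable {V : Type*}

/-- The `i`-dimensional faces of `X` (faces with `i+1` vertices). -/
def faces [DecidableEq V] (X : Finset (Finset V)) (i : ℕ) : Finset (Finset V) :=
  X.filter fun s => s.card = i + 1

/-- `X` is a simplicial complex: it is closed under taking subsets. -/
def IsComplex [DecidableEq V] (X : Finset (Finset V)) : Prop :=
  ∀ s ∈ X, ∀ t ⊆ s, t ∈ X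

/-- `X` is pure of dimension `d`: every face is contained in a `d`-dimensional face. -/
def IsPure [DecidableEq V] (X : Finset (Finset V)) (d : ℕ) : Prop :=
  ∀ s ∈ X, ∃ t ∈ faces X d, s ⊆ t

/-- `c(σ)`: the number of `d`-dimensional faces of `X` containing `σ`. -/
def cnt [DecidableEq V] (X : Finset (Finset V)) (d : ℕ) (σ : Finset V) : ℕ :=
  ((faces X d).filter fun τ => σ ⊆ τ).card

/-- The weight `w(σ) = c(σ)/(C(d+1,i+1)·|X(d)|)` of an `i`-face `σ`. -/
noncomputable def wt [DecidableEq V] (X : Finset (Finset V)) (d i : ℕ) (σ : Finset V) : ℝ :=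
  (cnt X d σ : ℝ) / ((((d + 1).choose (i + 1)) : ℝ) * ((faces X d).card : ℝ))

/-- The weighted norm of an `F₂` `i`-cochain, identified with its support. -/
noncomputable def cnorm [DecidableEq V] (X : Finset (Finset V)) (d i : ℕ)
    (α : Finset (Finset V)) : ℝ :=
  ∑ σ ∈ α, wt X d i σ

/-- The `F₂`-coboundary of an `i`-cochain `α` (identified with its support): the set of
`(i+1)`-faces containing an odd number of `i`-faces from `α`. -/
def coboundary [DecidableEq V] (X : Finset (Finset V)) (i : ℕ)
    (α : Finset (Finset V)) : Finset (Finset V) :=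
  (faces X (i + 1)).filter fun σ => ((σ.powersetCard (i + 1)).filter (· ∈ α)).card % 2 = 1

/-- The link of a vertex `v` in `X`. -/
def link [DecidableEq V] (X : Finset (Finset V)) (v : V) : Finset (Finset V) :=
  (X.filter fun s => v ∈ s).image fun s => s.erase v

/-- The localization `α_v` of a cochain `α` at the vertex `v`. -/
def loc [DecidableEq V] (α : Finset (Finset V)) (v : V) : Finset (Finset V) :=
  (α.filter fun s => v ∈ s).image fun s => s.erase v

/-- `β` is an `i`-coboundary, i.e. `β ∈ B^i(X, F₂)`; for `i = 0` these are the images of the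
reduced coboundary map `δ₋₁ : F₂ → C⁰`, namely `0` and the all-ones cochain. -/
def IsCoboundarySet [DecidableEq V] (X : Finset (Finset V)) : ℕ → Finset (Finset V) → Prop
  | 0, β => β = ∅ ∨ β = faces X 0
  | i + 1, β => ∃ γ ⊆ faces X i, β = coboundary X i γ

/-- `β` is a minimal `i`-cochain: it has minimal weighted norm in its coset mod `B^i`. -/
def IsMinimal [DecidableEq V] (X : Finset (Finset V)) (d i : ℕ)
    (β : Finset (Finset V)) : Prop :=
  ∀ γ : Finset (Finset V), IsCoboundarySet X i γ → cnorm X d i β ≤ cnorm X d i (symmDiff β γ)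

/-- `α ∈ C^i(X,F₂)` is locally minimal: for every vertex `v`, the localization `α_v` is a
minimal `(i-1)`-cochain of the link `X_v` (a pure `(d-1)`-dimensional complex). -/
def LocallyMinimal [DecidableEq V] (X : Finset (Finset V)) (d i : ℕ)
    (α : Finset (Finset V)) : Prop :=
  ∀ v : V, IsMinimal (link X v) (d - 1) (i - 1) (loc α v)

section Aux
set_option linter.unusedSectionVars false
set_option linter.unusedVariables false
variable [DecidableEq V]

lemma mem_loc {α : Finset (Finset V)} {v : V} {τ : Finset V} :
    τ ∈ loc α v ↔ v ∉ τ ∧ insert v τ ∈ α := by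
  constructor
  · rintro h
    simp only [loc, mem_image, mem_filter] at h
    obtain ⟨s, ⟨hs, hv⟩, rfl⟩ := h
    exact ⟨notMem_erase _ _, by rwa [insert_erase hv]⟩
  · rintro ⟨hv, hs⟩
    simp only [loc, mem_image, mem_filter]
    exact ⟨insert v τ, ⟨hs, mem_insert_self _ _⟩, erase_insert hv⟩

lemma link_eq_loc (X : Finset (Finset V)) (v : V) : link X v = loc X v := rfl

lemma mem_facesI {X : Finset (Finset V)} {i : ℕ} {s : Finset V} :
    s ∈ faces X i ↔ s ∈ X ∧ s.card = i + 1 := mem_filter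

lemma mem_faces_link {X : Finset (Finset V)} {v : V} {k : ℕ} {τ : Finset V} :
    τ ∈ faces (link X v) k ↔ v ∉ τ ∧ insert v τ ∈ X ∧ τ.card = k + 1 := by
  rw [mem_facesI, link_eq_loc, mem_loc]; tauto

lemma loc_symmDiff (A B : Finset (Finset V)) (v : V) :
    loc (symmDiff A B) v = symmDiff (loc A v) (loc B v) := by
  ext τ
  simp only [mem_loc, Finset.mem_symmDiff]
  tauto

lemma symmDiff_empty' (a : Finset (Finset V)) : symmDiff a ∅ = a := by
  ext x; simp [Finset.mem_symmDiff]

lemma card_symmDiff_mod_two {α : Type*} [DecidableEq α] (a b : Finset α) :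
    (symmDiff a b).card % 2 = (a.card + b.card) % 2 := by
  have h1 : symmDiff a b = (a \ b) ∪ (b \ a) := by
    ext x; simp [Finset.mem_symmDiff]
  have hd : Disjoint (a \ b) (b \ a) := by
    simp only [Finset.disjoint_left, mem_sdiff]; tauto
  have h2 := card_union_of_disjoint hd
  have h3 := card_sdiff_add_card_inter a b
  have h4 := card_sdiff_add_card_inter b a
  rw [inter_comm] at h4
  rw [h1, h2]
  omega

lemma mem_coboundary {X : Finset (Finset V)} {i : ℕ} {A : Finset (Finset V)} {σ : Finset V} :
    σ ∈ coboundary X i A ↔ σ ∈ faces X (i + 1) ∧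
      ((σ.powersetCard (i + 1)).filter (· ∈ A)).card % 2 = 1 := mem_filter

lemma coboundary_subset (X : Finset (Finset V)) (i : ℕ) (A : Finset (Finset V)) :
    coboundary X i A ⊆ faces X (i + 1) := filter_subset _ _

lemma coboundary_empty (X : Finset (Finset V)) (i : ℕ) : coboundary X i ∅ = ∅ := by
  ext σ; simp [coboundary]

lemma coboundary_symmDiff (X : Finset (Finset V)) (i : ℕ) (A B : Finset (Finset V)) :
    coboundary X i (symmDiff A B) = symmDiff (coboundary X i A) (coboundary X i B) := by
  ext σ
  have hf : (σ.powersetCard (i + 1)).filter (· ∈ symmDiff A B)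
      = symmDiff ((σ.powersetCard (i + 1)).filter (· ∈ A))
          ((σ.powersetCard (i + 1)).filter (· ∈ B)) := by
    ext s; simp only [mem_filter, Finset.mem_symmDiff]; tauto
  rw [Finset.mem_symmDiff, mem_coboundary, mem_coboundary, mem_coboundary, hf,
    card_symmDiff_mod_two]
  by_cases hσ : σ ∈ faces X (i + 1) <;> simp [hσ] <;> omega

lemma isCoboundarySet_symmDiff {X : Finset (Finset V)} {j : ℕ} {a b : Finset (Finset V)}
    (ha : IsCoboundarySet X (j + 1) a) (hb : IsCoboundarySet X (j + 1) b) :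
    IsCoboundarySet X (j + 1) (symmDiff a b) := by
  obtain ⟨ga, hga, rfl⟩ := ha
  obtain ⟨gb, hgb, rfl⟩ := hb
  refine ⟨symmDiff ga gb, ?_, (coboundary_symmDiff X j ga gb).symm⟩
  intro x hx
  rw [Finset.mem_symmDiff] at hx
  rcases hx with ⟨h, _⟩ | ⟨h, _⟩
  · exact hga h
  · exact hgb h

lemma cnt_link {X : Finset (Finset V)} (hcpx : IsComplex X) {v : V} {σ : Finset V}
    (hv : v ∈ σ) (e : ℕ) : cnt (link X v) e (σ.erase v) = cnt X (e + 1) σ := by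
  unfold cnt
  have hi : ∀ ρ ∈ (faces (link X v) e).filter (fun τ => σ.erase v ⊆ τ),
      insert v ρ ∈ (faces X (e + 1)).filter (fun τ => σ ⊆ τ) := by
    intro ρ hρ
    rw [mem_filter, mem_faces_link] at hρ
    obtain ⟨⟨hvρ, hins, hcard⟩, hsub⟩ := hρ
    rw [mem_filter, mem_facesI]
    refine ⟨⟨hins, by rw [card_insert_of_notMem hvρ, hcard]⟩, ?_⟩
    intro x hx
    rcases eq_or_ne x v with rfl | hxv
    · exact mem_insert_self _ _
    · exact mem_insert_of_mem (hsub (mem_erase.mpr ⟨hxv, hx⟩))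
  have hj : ∀ τ ∈ (faces X (e + 1)).filter (fun τ => σ ⊆ τ),
      τ.erase v ∈ (faces (link X v) e).filter (fun τ => σ.erase v ⊆ τ) := by
    intro τ hτ
    rw [mem_filter, mem_facesI] at hτ
    obtain ⟨⟨hτX, hcard⟩, hsub⟩ := hτ
    have hvτ : v ∈ τ := hsub hv
    rw [mem_filter, mem_faces_link]
    refine ⟨⟨notMem_erase _ _, by rwa [insert_erase hvτ],
      by simp [card_erase_of_mem hvτ, hcard]⟩, erase_subset_erase _ hsub⟩
  exact card_bij' (fun ρ _ => insert v ρ) (fun τ _ => τ.erase v) hi hj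
    (fun ρ hρ => by
      rw [mem_filter, mem_faces_link] at hρ
      exact erase_insert hρ.1.1)
    (fun τ hτ => by
      rw [mem_filter] at hτ
      exact insert_erase (hτ.2 hv))

lemma wt_insert {X : Finset (Finset V)} (hcpx : IsComplex X) {v : V} {σ : Finset V}
    (hv : v ∈ σ) {e j : ℕ} (hje : j ≤ e) (hm : 0 < (faces (link X v) e).card) :
    wt X (e + 1) (j + 1) σ
      = ((((e + 1).choose (j + 1) : ℝ) * ((faces (link X v) e).card : ℝ))
          / ((((e + 2).choose (j + 2)) : ℝ) * ((faces X (e + 1)).card : ℝ)))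
        * wt (link X v) e j (σ.erase v) := by
  have hC1m : (((e + 1).choose (j + 1) : ℝ) * ((faces (link X v) e).card : ℝ)) ≠ 0 := by
    have h1 : 0 < (e + 1).choose (j + 1) := Nat.choose_pos (by omega)
    positivity
  unfold wt
  rw [← cnt_link hcpx hv e]
  rw [div_mul_div_comm]
  rw [show ((e + 1 + 1).choose (j + 1 + 1) : ℝ) = (((e + 2).choose (j + 2)) : ℝ) by norm_num]
  rw [mul_comm (((e + 1).choose (j + 1) : ℝ) * _) ((cnt (link X v) e (σ.erase v) : ℝ))]
  rw [mul_div_mul_right _ _ hC1m]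

lemma cnorm_split {X : Finset (Finset V)} (hcpx : IsComplex X) (v : V)
    {e j : ℕ} (hje : j ≤ e) (hm : 0 < (faces (link X v) e).card) (β : Finset (Finset V)) :
    cnorm X (e + 1) (j + 1) β
      = (∑ σ ∈ β.filter (fun s => ¬ v ∈ s), wt X (e + 1) (j + 1) σ)
        + ((((e + 1).choose (j + 1) : ℝ) * ((faces (link X v) e).card : ℝ))
            / ((((e + 2).choose (j + 2)) : ℝ) * ((faces X (e + 1)).card : ℝ)))
          * cnorm (link X v) e j (loc β v) := by
  unfold cnorm
  rw [← sum_filter_add_sum_filter_not β (fun s => v ∈ s) (wt X (e + 1) (j + 1))]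
  rw [add_comm]
  congr 1
  rw [loc, sum_image]
  · rw [mul_sum]
    apply sum_congr rfl
    intro σ hσ
    rw [mem_filter] at hσ
    exact wt_insert hcpx hσ.2 hje hm
  · intro x hx y hy hxy
    rw [mem_coe, mem_filter] at hx hy
    beta_reduce at hxy
    rw [← insert_erase hx.2, hxy, insert_erase hy.2]

lemma powerset_filter_singleton (v : V) (σ : Finset V) :
    ((σ.powersetCard (0 + 1)).filter (· ∈ ({{v}} : Finset (Finset V))))
      = if v ∈ σ then {({v} : Finset V)} else ∅ := by
  ext ρ
  simp only [mem_filter, mem_powersetCard, mem_singleton]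
  split_ifs with h
  · simp only [mem_singleton]
    constructor
    · rintro ⟨_, rfl⟩; rfl
    · rintro rfl; exact ⟨⟨singleton_subset_iff.mpr h, card_singleton v⟩, rfl⟩
  · simp only [notMem_empty, iff_false]
    rintro ⟨⟨hsub, _⟩, rfl⟩
    exact h (singleton_subset_iff.mp hsub)

lemma coboundary_single (X : Finset (Finset V)) (v : V) :
    coboundary X 0 {{v}} = (faces X (0 + 1)).filter (fun σ => v ∈ σ) := by
  ext σ
  rw [mem_coboundary, mem_filter, powerset_filter_singleton]
  by_cases h : v ∈ σ <;> simp [h]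

lemma loc_coboundary_single (X : Finset (Finset V)) (v : V) :
    loc (coboundary X 0 {{v}}) v = faces (link X v) 0 := by
  ext τ
  rw [mem_loc, coboundary_single, mem_filter, mem_facesI, mem_faces_link]
  constructor
  · rintro ⟨hvτ, ⟨hX, hc⟩, _⟩
    exact ⟨hvτ, hX, by rw [card_insert_of_notMem hvτ] at hc; omega⟩
  · rintro ⟨hvτ, hX, hc⟩
    exact ⟨hvτ, ⟨hX, by rw [card_insert_of_notMem hvτ, hc]⟩, mem_insert_self _ _⟩

lemma lift_mem_v {X : Finset (Finset V)} {v : V} {k : ℕ} {β : Finset (Finset V)}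
    (hβ : β ⊆ faces (link X v) k) :
    ∀ s ∈ coboundary X (k + 1) (β.image (insert v)), v ∈ s := by
  intro s hs
  rw [mem_coboundary] at hs
  by_contra hvs
  have h0 : ((s.powersetCard (k + 1 + 1)).filter (· ∈ β.image (insert v))) = ∅ := by
    ext ρ
    simp only [mem_filter, mem_powersetCard, mem_image, notMem_empty, iff_false]
    rintro ⟨⟨hρs, _⟩, b, hb, rfl⟩
    exact hvs (hρs (mem_insert_self v b))
  rw [h0] at hs
  simp at hs

lemma lift_subset {X : Finset (Finset V)} {v : V} {k : ℕ}
    {β : Finset (Finset V)} (hβ : β ⊆ faces (link X v) k) :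
    β.image (insert v) ⊆ faces X (k + 1) := by
  intro s hs
  rw [mem_image] at hs
  obtain ⟨b, hb, rfl⟩ := hs
  have h := hβ hb
  rw [mem_faces_link] at h
  obtain ⟨hvb, hins, hc⟩ := h
  rw [mem_facesI]
  exact ⟨hins, by rw [card_insert_of_notMem hvb, hc]⟩

lemma count_lift {v : V} {k : ℕ} {β : Finset (Finset V)} {τ : Finset V}
    (hvβ : ∀ b ∈ β, v ∉ b) (hvτ : v ∉ τ) :
    (((insert v τ).powersetCard (k + 1 + 1)).filter (· ∈ β.image (insert v))).card
      = ((τ.powersetCard (k + 1)).filter (· ∈ β)).card := by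
  have hi : ∀ ρ ∈ ((insert v τ).powersetCard (k + 1 + 1)).filter (· ∈ β.image (insert v)),
      ρ.erase v ∈ (τ.powersetCard (k + 1)).filter (· ∈ β) := by
    intro ρ hρ
    rw [mem_filter, mem_powersetCard] at hρ
    obtain ⟨⟨hρsub, hρc⟩, hρB⟩ := hρ
    rw [mem_image] at hρB
    obtain ⟨b, hb, rfl⟩ := hρB
    rw [erase_insert (hvβ b hb)]
    rw [mem_filter, mem_powersetCard]
    refine ⟨⟨?_, ?_⟩, hb⟩
    · intro x hx
      have hxρ : x ∈ insert v τ := hρsub (mem_insert_of_mem hx)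
      rcases mem_insert.mp hxρ with rfl | h
      · exact absurd hx (hvβ _ hb)
      · exact h
    · rw [card_insert_of_notMem (hvβ b hb)] at hρc; omega
  have hj : ∀ b ∈ (τ.powersetCard (k + 1)).filter (· ∈ β),
      insert v b ∈ ((insert v τ).powersetCard (k + 1 + 1)).filter (· ∈ β.image (insert v)) := by
    intro b hb
    rw [mem_filter, mem_powersetCard] at hb
    obtain ⟨⟨hbsub, hbc⟩, hbβ⟩ := hb
    rw [mem_filter, mem_powersetCard, mem_image]
    refine ⟨⟨insert_subset_insert v hbsub, ?_⟩, b, hbβ, rfl⟩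
    rw [card_insert_of_notMem (hvβ b hbβ), hbc]
  exact card_bij' (fun ρ _ => ρ.erase v) (fun b _ => insert v b) hi hj
    (fun ρ hρ => by
      rw [mem_filter, mem_image] at hρ
      obtain ⟨_, b, hb, rfl⟩ := hρ
      show insert v ((insert v b).erase v) = insert v b
      rw [erase_insert (hvβ b hb)])
    (fun b hb => by
      rw [mem_filter] at hb
      show (insert v b).erase v = b
      exact erase_insert (hvβ b hb.2))

lemma loc_lift {X : Finset (Finset V)} {v : V} {k : ℕ}
    {β : Finset (Finset V)} (hβ : β ⊆ faces (link X v) k) :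
    loc (coboundary X (k + 1) (β.image (insert v))) v = coboundary (link X v) k β := by
  have hvβ : ∀ b ∈ β, v ∉ b := fun b hb => (mem_faces_link.mp (hβ hb)).1
  ext τ
  rw [mem_loc, mem_coboundary, mem_coboundary]
  constructor
  · rintro ⟨hvτ, hfaces, hodd⟩
    rw [mem_facesI] at hfaces
    refine ⟨?_, ?_⟩
    · rw [mem_faces_link]
      refine ⟨hvτ, hfaces.1, ?_⟩
      have hc := hfaces.2
      rw [card_insert_of_notMem hvτ] at hc
      omega
    · rw [← count_lift hvβ hvτ]
      exact hodd
  · rintro ⟨hτf, hodd⟩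
    have hvτ : v ∉ τ := (mem_faces_link.mp hτf).1
    rw [mem_faces_link] at hτf
    refine ⟨hvτ, ?_, ?_⟩
    · rw [mem_facesI]
      exact ⟨hτf.2.1, by rw [card_insert_of_notMem hvτ, hτf.2.2]⟩
    · rw [count_lift hvβ hvτ]
      exact hodd

end Aux

set_option maxHeartbeats 1000000 in
/-- For every `α ∈ C^i(X,F₂)` on a finite pure `d`-dimensional homogeneous
simplicial complex `X` there is a locally minimal `α′` with `α′ ≡ α (mod B^i(X,F₂))` and
`‖α′‖ ≤ ‖α‖`. -/
theorem stmt_6 {V : Type*} [Fintype V] [DecidableEq V]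
    (X : Finset (Finset V)) (d i : ℕ) (hd : 1 ≤ d) (hi : 1 ≤ i) (hid : i ≤ d)
    (hcpx : IsComplex X) (hpure : IsPure X d)
    (hvert : ∀ v : V, {v} ∈ X)
    (hhom : ∃ m : ℕ, ∀ v : V, (faces (link X v) (d - 1)).card = m)
    (α : Finset (Finset V)) (hα : α ⊆ faces X i) :
    ∃ α' ⊆ faces X i, LocallyMinimal X d i α' ∧
      (∃ γ : Finset (Finset V), IsCoboundarySet X i γ ∧ α' = symmDiff α γ) ∧
      cnorm X d i α' ≤ cnorm X d i α := by
  obtain ⟨j, rfl⟩ : ∃ j, i = j + 1 := ⟨i - 1, by omega⟩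
  obtain ⟨e, rfl⟩ : ∃ e, d = e + 1 := ⟨d - 1, by omega⟩
  have hje : j ≤ e := by omega
  have hcob_empty : IsCoboundarySet X (j + 1) (∅ : Finset (Finset V)) :=
    ⟨∅, empty_subset _, (coboundary_empty X j).symm⟩
  classical
  obtain ⟨α', hα'T, hmin⟩ := Finset.exists_min_image
    (((faces X (j + 1)).powerset).filter
      (fun β => ∃ γ, IsCoboundarySet X (j + 1) γ ∧ β = symmDiff α γ))
    (cnorm X (e + 1) (j + 1))
    ⟨α, by
      rw [mem_filter, mem_powerset]
      exact ⟨hα, ∅, hcob_empty, (symmDiff_empty' α).symm⟩⟩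
  rw [mem_filter, mem_powerset] at hα'T
  obtain ⟨hα'sub, γ₀, hγ₀, hα'eq⟩ := hα'T
  have hminT : ∀ β ⊆ faces X (j + 1),
      (∃ γ, IsCoboundarySet X (j + 1) γ ∧ β = symmDiff α γ) →
      cnorm X (e + 1) (j + 1) α' ≤ cnorm X (e + 1) (j + 1) β := by
    intro β h1 h2
    exact hmin β (by rw [mem_filter, mem_powerset]; exact ⟨h1, h2⟩)
  refine ⟨α', hα'sub, ?_, ⟨γ₀, hγ₀, hα'eq⟩,
    hminT α hα ⟨∅, hcob_empty, (symmDiff_empty' α).symm⟩⟩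
  intro v
  show IsMinimal (link X v) e j (loc α' v)
  have hm : 0 < (faces (link X v) e).card := by
    obtain ⟨t, ht, hsub⟩ := hpure {v} (hvert v)
    rw [mem_facesI] at ht
    have hvt : v ∈ t := hsub (mem_singleton_self v)
    refine card_pos.mpr ⟨t.erase v, ?_⟩
    rw [mem_faces_link]
    refine ⟨notMem_erase _ _, by rw [insert_erase hvt]; exact ht.1, ?_⟩
    simp [card_erase_of_mem hvt, ht.2]
  have hN : 0 < (faces X (e + 1)).card := by
    obtain ⟨t, ht, _⟩ := hpure {v} (hvert v)
    exact card_pos.mpr ⟨t, ht⟩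
  have hK : 0 < (((e + 1).choose (j + 1) : ℝ) * ((faces (link X v) e).card : ℝ))
      / ((((e + 2).choose (j + 2)) : ℝ) * ((faces X (e + 1)).card : ℝ)) := by
    have h1 : 0 < (e + 1).choose (j + 1) := Nat.choose_pos (by omega)
    have h2 : 0 < (e + 2).choose (j + 2) := Nat.choose_pos (by omega)
    have h1' : (0 : ℝ) < ((e + 1).choose (j + 1) : ℝ) := by exact_mod_cast h1
    have h2' : (0 : ℝ) < ((e + 2).choose (j + 2) : ℝ) := by exact_mod_cast h2
    have hm' : (0 : ℝ) < ((faces (link X v) e).card : ℝ) := by exact_mod_cast hm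
    have hN' : (0 : ℝ) < ((faces X (e + 1)).card : ℝ) := by exact_mod_cast hN
    exact div_pos (mul_pos h1' hm') (mul_pos h2' hN')
  have key : ∀ γ : Finset (Finset V), IsCoboundarySet X (j + 1) γ → (∀ s ∈ γ, v ∈ s) →
      cnorm (link X v) e j (loc α' v)
        ≤ cnorm (link X v) e j (symmDiff (loc α' v) (loc γ v)) := by
    intro γ hγ hγv
    have hγsub : γ ⊆ faces X (j + 1) := by
      obtain ⟨g, _, rfl⟩ := hγ
      exact coboundary_subset X j g
    have h1 : cnorm X (e + 1) (j + 1) α' ≤ cnorm X (e + 1) (j + 1) (symmDiff α' γ) := by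
      apply hminT
      · intro x hx
        rw [Finset.mem_symmDiff] at hx
        rcases hx with ⟨h, _⟩ | ⟨h, _⟩
        · exact hα'sub h
        · exact hγsub h
      · exact ⟨symmDiff γ₀ γ, isCoboundarySet_symmDiff hγ₀ hγ, by rw [hα'eq, symmDiff_assoc]⟩
    rw [cnorm_split hcpx v hje hm α', cnorm_split hcpx v hje hm (symmDiff α' γ)] at h1
    have hfil : (symmDiff α' γ).filter (fun s => ¬ v ∈ s) = α'.filter (fun s => ¬ v ∈ s) := by
      ext s
      simp only [mem_filter, Finset.mem_symmDiff]
      constructor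
      · rintro ⟨h, hv2⟩
        rcases h with ⟨h, _⟩ | ⟨h, _⟩
        · exact ⟨h, hv2⟩
        · exact absurd (hγv _ h) hv2
      · rintro ⟨h, hv2⟩
        exact ⟨Or.inl ⟨h, fun hc => hv2 (hγv _ hc)⟩, hv2⟩
    rw [hfil, loc_symmDiff] at h1
    have h2 := le_of_add_le_add_left h1
    exact (mul_le_mul_iff_right₀ hK).mp h2
  intro γv hγv
  cases j with
  | zero =>
    have hγv' : γv = ∅ ∨ γv = faces (link X v) 0 := hγv
    rcases hγv' with rfl | rfl
    · rw [symmDiff_empty']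
    · obtain ⟨Γ, hΓ⟩ : ∃ Γ, Γ = coboundary X 0 {{v}} := ⟨_, rfl⟩
      have hsub1 : ({{v}} : Finset (Finset V)) ⊆ faces X 0 := by
        rw [singleton_subset_iff, mem_facesI]
        exact ⟨hvert v, card_singleton v⟩
      have hmemv : ∀ s ∈ Γ, v ∈ s := by
        rw [hΓ]
        intro s hs
        rw [coboundary_single, mem_filter] at hs
        exact hs.2
      have hcb : IsCoboundarySet X (0 + 1) Γ := by
        rw [hΓ]
        show ∃ g ⊆ faces X 0, coboundary X 0 {{v}} = coboundary X 0 g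
        refine ⟨{{v}}, hsub1, ?_⟩
        with_reducible rfl
      have hloc : loc Γ v = faces (link X v) 0 := by
        rw [hΓ]
        exact loc_coboundary_single X v
      have h := key Γ hcb hmemv
      rwa [hloc] at h
  | succ k =>
    obtain ⟨β, hβ, rfl⟩ := hγv
    obtain ⟨Γ, hΓ⟩ : ∃ Γ, Γ = coboundary X (k + 1) (β.image (insert v)) := ⟨_, rfl⟩
    have hcb : IsCoboundarySet X (k + 1 + 1) Γ := by
      rw [hΓ]
      show ∃ g ⊆ faces X (k + 1),
        coboundary X (k + 1) (β.image (insert v)) = coboundary X (k + 1) g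
      refine ⟨β.image (insert v), lift_subset hβ, ?_⟩
      with_reducible rfl
    have hmemv : ∀ s ∈ Γ, v ∈ s := by
      rw [hΓ]
      exact lift_mem_v hβ
    have hloc : loc Γ v = coboundary (link X v) k β := by
      rw [hΓ]
      exact loc_lift hβ
    have h := key Γ hcb hmemv
    rwa [hloc] at h
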